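/- Suppose |v(t)| ≤ v_max, |Ω(t)| ≤ Ω_max, |R₃₃(t)| ≥ ρ for all t, with v_max Ω_max < g ρ²/√6, and m ∈ S² not collinear with e₃. Then there exist ε₁, ε₂ > 0 and μ > 0 such that for all t and all x, y ∈ R^3: (ε₂ g² ρ²/(2(1+ε₂)) - ε₁ v_max²)(x₁²+x₂²) + ((m₁²+m₂²) ε₂g²ρ²/((1+ε₂)(2m₃²) + ε₂g²ρ²)) x₃² + (ε₁ρ²/(3(1+ε₁)) - ε₂ Ω_max²)|y|² ≥ μ(|x|²+|y|²), with all three coefficients positive. -/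

import Mathlib

set_option maxHeartbeats 1000000


open Matrix

/-- Sum of squares of the components of a vector in `ℝ³` (the squared Euclidean norm). -/
def sq3 (u : Fin 3 → ℝ) : ℝ := u 0 ^ 2 + u 1 ^ 2 + u 2 ^ 2

/-- Slow-motion case (Case 3) of the observability lemma: under the bounds
`|v(t)| ≤ v_max`, `|Ω(t)| ≤ Ω_max`, `|R₃₃(t)| ≥ ρ` with `v_max Ω_max < gρ²/√6`,
there exist `ε₁, ε₂, μ > 0`, with all three coefficients positive, such that the
stated quadratic lower bound holds for all `t` and all `x, y ∈ ℝ³`. -/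
theorem stmt16 (g ρ vmax Ωmax : ℝ)
    (hg : 0 < g) (hρ : 0 < ρ) (hv : 0 < vmax) (hΩ : 0 < Ωmax)
    (hslow : vmax * Ωmax < g * ρ ^ 2 / Real.sqrt 6)
    (m : Fin 3 → ℝ) (hm : m 0 ^ 2 + m 1 ^ 2 + m 2 ^ 2 = 1)
    (hnc : m 0 ^ 2 + m 1 ^ 2 > 0)
    (v Ω : ℝ → Fin 3 → ℝ) (R : ℝ → Matrix (Fin 3) (Fin 3) ℝ)
    (hvb : ∀ t : ℝ, Real.sqrt (sq3 (v t)) ≤ vmax)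
    (hΩb : ∀ t : ℝ, Real.sqrt (sq3 (Ω t)) ≤ Ωmax)
    (hR33 : ∀ t : ℝ, |R t 2 2| ≥ ρ) :
    ∃ ε₁ ε₂ μ : ℝ, 0 < ε₁ ∧ 0 < ε₂ ∧ 0 < μ ∧
      0 < ε₂ * g ^ 2 * ρ ^ 2 / (2 * (1 + ε₂)) - ε₁ * vmax ^ 2 ∧
      0 < (m 0 ^ 2 + m 1 ^ 2) * ε₂ * g ^ 2 * ρ ^ 2
            / ((1 + ε₂) * (2 * m 2 ^ 2) + ε₂ * g ^ 2 * ρ ^ 2) ∧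
      0 < ε₁ * ρ ^ 2 / (3 * (1 + ε₁)) - ε₂ * Ωmax ^ 2 ∧
      ∀ (t : ℝ) (x y : Fin 3 → ℝ),
        (ε₂ * g ^ 2 * ρ ^ 2 / (2 * (1 + ε₂)) - ε₁ * vmax ^ 2) * (x 0 ^ 2 + x 1 ^ 2)
          + ((m 0 ^ 2 + m 1 ^ 2) * ε₂ * g ^ 2 * ρ ^ 2
              / ((1 + ε₂) * (2 * m 2 ^ 2) + ε₂ * g ^ 2 * ρ ^ 2)) * x 2 ^ 2
          + (ε₁ * ρ ^ 2 / (3 * (1 + ε₁)) - ε₂ * Ωmax ^ 2) * sq3 y ≥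
        μ * (sq3 x + sq3 y) := by
  -- squared slow-motion condition
  have h6 : (0:ℝ) < Real.sqrt 6 := Real.sqrt_pos.mpr (by norm_num)
  have h6sq : Real.sqrt 6 ^ 2 = 6 := Real.sq_sqrt (by norm_num)
  have h1 : vmax * Ωmax * Real.sqrt 6 < g * ρ ^ 2 := by
    rwa [lt_div_iff₀ h6] at hslow
  have hvΩ : 0 < vmax * Ωmax := mul_pos hv hΩ
  have hsq : 6 * (vmax * Ωmax) ^ 2 < g ^ 2 * ρ ^ 4 := by
    nlinarith [mul_pos hvΩ h6, sq_nonneg (g * ρ ^ 2 + vmax * Ωmax * Real.sqrt 6)]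
  set A0 : ℝ := g ^ 2 * ρ ^ 2 / (2 * vmax ^ 2) with hA0def
  set B0 : ℝ := 3 * Ωmax ^ 2 / ρ ^ 2 with hB0def
  have hA0 : 0 < A0 := by positivity
  have hB0 : 0 < B0 := by positivity
  have hBA : B0 < A0 := by
    rw [hA0def, hB0def, div_lt_div_iff₀ (by positivity) (by positivity)]
    nlinarith
  set r : ℝ := Real.sqrt (A0 * B0) with hrdef
  have hr : 0 < r := Real.sqrt_pos.mpr (by positivity)
  have hr2 : r ^ 2 = A0 * B0 := Real.sq_sqrt (by positivity)
  have hrA : r < A0 := by nlinarith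
  have hBr : B0 < r := by nlinarith
  set ε₂ : ℝ := min (A0 / r - 1) ((r / B0 - 1) / r) / 2 with hε₂def
  set ε₁ : ℝ := r * ε₂ with hε₁def
  have hm1 : 0 < A0 / r - 1 := by
    have : 1 < A0 / r := (one_lt_div hr).mpr hrA
    linarith
  have hm2 : 0 < (r / B0 - 1) / r := by
    have h : 1 < r / B0 := (one_lt_div hB0).mpr hBr
    exact div_pos (by linarith) hr
  have hε₂ : 0 < ε₂ := half_pos (lt_min hm1 hm2)
  have hε₁ : 0 < ε₁ := mul_pos hr hε₂
  have hε₂lt1 : ε₂ < A0 / r - 1 := by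
    rw [hε₂def]
    have := min_le_left (A0 / r - 1) ((r / B0 - 1) / r)
    linarith
  have hε₂lt2 : ε₂ < (r / B0 - 1) / r := by
    rw [hε₂def]
    have := min_le_right (A0 / r - 1) ((r / B0 - 1) / r)
    linarith
  -- key scalar inequalities
  have hc1 : r * (1 + ε₂) < A0 := by
    have : r * ε₂ < r * (A0 / r - 1) := by
      exact (mul_lt_mul_iff_right₀ hr).mpr hε₂lt1
    have h' : A0 / r * r = A0 := div_mul_cancel₀ A0 hr.ne'
    nlinarith
  have hc2 : (1 + ε₁) * B0 < r := by
    have : r * ε₂ < r * ((r / B0 - 1) / r) := (mul_lt_mul_iff_right₀ hr).mpr hε₂lt2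
    have h' : (r / B0 - 1) / r * r = r / B0 - 1 := div_mul_cancel₀ _ hr.ne'
    have h'' : ε₁ < r / B0 - 1 := by rw [hε₁def]; linarith
    have : (1 + ε₁) < r / B0 := by linarith
    calc (1 + ε₁) * B0 < (r / B0) * B0 := by
          exact (mul_lt_mul_iff_left₀ hB0).mpr this
      _ = r := div_mul_cancel₀ r hB0.ne'
  have h1ε₂ : (0:ℝ) < 1 + ε₂ := by linarith
  have h1ε₁ : (0:ℝ) < 1 + ε₁ := by linarith
  -- coefficient A positive
  have hcA : 0 < ε₂ * g ^ 2 * ρ ^ 2 / (2 * (1 + ε₂)) - ε₁ * vmax ^ 2 := by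
    rw [sub_pos, lt_div_iff₀ (by positivity)]
    have h2 : r * (1 + ε₂) * (2 * vmax ^ 2) < g ^ 2 * ρ ^ 2 := by
      rw [hA0def] at hc1
      rw [lt_div_iff₀ (by positivity)] at hc1
      linarith
    have h3 := mul_lt_mul_of_pos_left h2 hε₂
    have heq : ε₁ * vmax ^ 2 * (2 * (1 + ε₂)) = ε₂ * (r * (1 + ε₂) * (2 * vmax ^ 2)) := by
      rw [hε₁def]; ring
    calc ε₁ * vmax ^ 2 * (2 * (1 + ε₂)) = ε₂ * (r * (1 + ε₂) * (2 * vmax ^ 2)) := heq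
      _ < ε₂ * (g ^ 2 * ρ ^ 2) := h3
      _ = ε₂ * g ^ 2 * ρ ^ 2 := by ring
  -- coefficient B positive
  have hcB : 0 < ε₁ * ρ ^ 2 / (3 * (1 + ε₁)) - ε₂ * Ωmax ^ 2 := by
    rw [sub_pos, lt_div_iff₀ (by positivity)]
    have h2 : (1 + ε₁) * (3 * Ωmax ^ 2) < r * ρ ^ 2 := by
      rw [hB0def] at hc2
      have h4 := mul_lt_mul_of_pos_right hc2 (pow_pos hρ 2)
      have heq : (1 + ε₁) * (3 * Ωmax ^ 2 / ρ ^ 2) * ρ ^ 2 = (1 + ε₁) * (3 * Ωmax ^ 2) := by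
        field_simp
      linarith
    have h3 := mul_lt_mul_of_pos_left h2 hε₂
    calc ε₂ * Ωmax ^ 2 * (3 * (1 + ε₁)) = ε₂ * ((1 + ε₁) * (3 * Ωmax ^ 2)) := by ring
      _ < ε₂ * (r * ρ ^ 2) := h3
      _ = ε₁ * ρ ^ 2 := by rw [hε₁def]; ring
  -- middle coefficient positive
  have hden : 0 < (1 + ε₂) * (2 * m 2 ^ 2) + ε₂ * g ^ 2 * ρ ^ 2 := by
    have h1' : (0:ℝ) ≤ (1 + ε₂) * (2 * m 2 ^ 2) := by positivity
    have h2' : (0:ℝ) < ε₂ * g ^ 2 * ρ ^ 2 := by positivity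
    linarith
  have hcM : 0 < (m 0 ^ 2 + m 1 ^ 2) * ε₂ * g ^ 2 * ρ ^ 2
      / ((1 + ε₂) * (2 * m 2 ^ 2) + ε₂ * g ^ 2 * ρ ^ 2) := by
    apply div_pos _ hden
    positivity
  set cA := ε₂ * g ^ 2 * ρ ^ 2 / (2 * (1 + ε₂)) - ε₁ * vmax ^ 2 with hcAdef
  set cM := (m 0 ^ 2 + m 1 ^ 2) * ε₂ * g ^ 2 * ρ ^ 2
      / ((1 + ε₂) * (2 * m 2 ^ 2) + ε₂ * g ^ 2 * ρ ^ 2) with hcMdef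
  set cB := ε₁ * ρ ^ 2 / (3 * (1 + ε₁)) - ε₂ * Ωmax ^ 2 with hcBdef
  refine ⟨ε₁, ε₂, min cA (min cM cB), hε₁, hε₂, ?_, hcA, hcM, hcB, ?_⟩
  · exact lt_min hcA (lt_min hcM hcB)
  · intro t x y
    have hμA : min cA (min cM cB) ≤ cA := min_le_left _ _
    have hμM : min cA (min cM cB) ≤ cM := le_trans (min_le_right _ _) (min_le_left _ _)
    have hμB : min cA (min cM cB) ≤ cB := le_trans (min_le_right _ _) (min_le_right _ _)
    have hy : 0 ≤ sq3 y := by unfold sq3; positivity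
    have e1 : min cA (min cM cB) * (x 0 ^ 2 + x 1 ^ 2) ≤ cA * (x 0 ^ 2 + x 1 ^ 2) :=
      mul_le_mul_of_nonneg_right hμA (by positivity)
    have e2 : min cA (min cM cB) * x 2 ^ 2 ≤ cM * x 2 ^ 2 :=
      mul_le_mul_of_nonneg_right hμM (by positivity)
    have e3 : min cA (min cM cB) * sq3 y ≤ cB * sq3 y :=
      mul_le_mul_of_nonneg_right hμB hy
    have heq : min cA (min cM cB) * (sq3 x + sq3 y)
        = min cA (min cM cB) * (x 0 ^ 2 + x 1 ^ 2) + min cA (min cM cB) * x 2 ^ 2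
          + min cA (min cM cB) * sq3 y := by
      unfold sq3; ring
    rw [ge_iff_le, heq]
    exact add_le_add (add_le_add e1 e2) e3
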